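/- Let f : X → Y be a closed continuous surjection between separable metric spaces such that Y has property C and for every y ∈ Y the fibre f⁻¹(y) is weakly infinite dimensional. Then X is weakly infinite dimensional. -/

import Mathlib

open Set Metric

/-- A separator between `A` and `B` in a topological space: a closed set `L` whose
complement is the union of two disjoint open sets containing `A` and `B` respectively. -/
def IsSeparator {X : Type*} [TopologicalSpace X] (A B L : Set X) : Prop :=
  IsClosed L ∧ ∃ U V : Set X, IsOpen U ∧ IsOpen V ∧ Disjoint U V ∧
    A ⊆ U ∧ B ⊆ V ∧ Lᶜ = U ∪ V

/-- A family of pairs of sets is essential if every choice of separators has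
nonempty intersection. -/
def IsEssentialFamily {X : Type*} [TopologicalSpace X] {Γ : Type*}
    (A B : Γ → Set X) : Prop :=
  ∀ L : Γ → Set X, (∀ i, IsSeparator (A i) (B i) (L i)) → (⋂ i, L i).Nonempty

/-- A space is strongly infinite dimensional if it admits a countably infinite
essential family of pairs of disjoint closed subsets. -/
def StronglyInfiniteDimensional (X : Type*) [TopologicalSpace X] : Prop :=
  ∃ A B : ℕ → Set X,
    (∀ n, IsClosed (A n) ∧ IsClosed (B n) ∧ Disjoint (A n) (B n)) ∧
    IsEssentialFamily A B

/-- Haver's property `C`: for every sequence of open covers `G 1, G 2, …` there is a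
sequence `H 1, H 2, …` of families of pairwise disjoint open sets, each member of `H i`
contained in a member of `G i`, with `⋃ i, H i` a cover. -/
def PropertyC (Y : Type*) [TopologicalSpace Y] : Prop :=
  ∀ G : ℕ → Set (Set Y),
    (∀ i, (∀ U ∈ G i, IsOpen U) ∧ ⋃₀ G i = univ) →
    ∃ H : ℕ → Set (Set Y),
      (∀ i, (∀ U ∈ H i, IsOpen U) ∧ (H i).Pairwise Disjoint ∧
        ∀ U ∈ H i, ∃ W ∈ G i, U ⊆ W) ∧
      ⋃ i, ⋃₀ H i = univ

lemma sep_exists {X : Type*} [MetricSpace X] {A B : Set X}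
    (hA : IsClosed A) (hB : IsClosed B) (hAB : Disjoint A B) :
    ∃ L, IsSeparator A B L := by
  rcases eq_empty_or_nonempty A with hAe | hAne
  · exact ⟨∅, isClosed_empty, ∅, univ, isOpen_empty, isOpen_univ,
      disjoint_bot_left, by simp [hAe], subset_univ _, by simp⟩
  rcases eq_empty_or_nonempty B with hBe | hBne
  · exact ⟨∅, isClosed_empty, univ, ∅, isOpen_univ, isOpen_empty,
      disjoint_bot_right, subset_univ _, by simp [hBe], by simp⟩
  refine ⟨({x | infDist x A < infDist x B} ∪ {x | infDist x B < infDist x A})ᶜ,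
    (IsOpen.union ?_ ?_).isClosed_compl,
    {x | infDist x A < infDist x B}, {x | infDist x B < infDist x A},
    ?_, ?_, ?_, ?_, ?_, by rw [compl_compl]⟩
  · exact isOpen_lt (continuous_infDist_pt A) (continuous_infDist_pt B)
  · exact isOpen_lt (continuous_infDist_pt B) (continuous_infDist_pt A)
  · exact isOpen_lt (continuous_infDist_pt A) (continuous_infDist_pt B)
  · exact isOpen_lt (continuous_infDist_pt B) (continuous_infDist_pt A)
  · rw [Set.disjoint_left]
    intro x hx hx'
    simp only [mem_setOf_eq] at hx hx'
    exact absurd hx' (not_lt_of_gt hx)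
  · intro a ha
    have h1 : infDist a A = 0 := infDist_zero_of_mem ha
    have h2 : infDist a B ≠ 0 := by
      intro h0
      have : a ∈ closure B := (mem_closure_iff_infDist_zero hBne).mpr h0
      rw [hB.closure_eq] at this
      exact (Set.disjoint_left.mp hAB ha) this
    have : 0 < infDist a B := lt_of_le_of_ne infDist_nonneg (Ne.symm h2)
    simpa [h1] using this
  · intro b hb
    have h1 : infDist b B = 0 := infDist_zero_of_mem hb
    have h2 : infDist b A ≠ 0 := by
      intro h0
      have : b ∈ closure A := (mem_closure_iff_infDist_zero hAne).mpr h0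
      rw [hA.closure_eq] at this
      exact (Set.disjoint_right.mp hAB hb) this
    have : 0 < infDist b A := lt_of_le_of_ne infDist_nonneg (Ne.symm h2)
    simpa [h1] using this

/-- Disjointification: two disjoint relatively-open subsets of `Z` inside given
ambient open sets can be separated by ambient open sets. -/

lemma disjointify {X : Type*} [MetricSpace X] {Z u v O₁ O₂ P' Q' : Set X}
    (hu : u = O₁ ∩ Z) (hv : v = O₂ ∩ Z) (hO₁ : IsOpen O₁) (hO₂ : IsOpen O₂)
    (huv : Disjoint u v) (hP : IsOpen P') (hQ : IsOpen Q')
    (huP : u ⊆ P') (hvQ : v ⊆ Q') :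
    ∃ U V : Set X, IsOpen U ∧ IsOpen V ∧ Disjoint U V ∧ u ⊆ U ∧ v ⊆ V ∧
      U ⊆ P' ∧ V ⊆ Q' := by
  rcases eq_empty_or_nonempty u with hue | hune
  · exact ⟨∅, Q', isOpen_empty, hQ, disjoint_bot_left, by simp [hue], hvQ,
      empty_subset _, subset_rfl⟩
  rcases eq_empty_or_nonempty v with hve | hvne
  · exact ⟨P', ∅, hP, isOpen_empty, disjoint_bot_right, huP, by simp [hve],
      subset_rfl, empty_subset _⟩
  refine ⟨P' ∩ O₁ ∩ {x | infDist x u < infDist x v},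
    Q' ∩ O₂ ∩ {x | infDist x v < infDist x u}, ?_, ?_, ?_, ?_, ?_, ?_, ?_⟩
  · exact (hP.inter hO₁).inter (isOpen_lt (continuous_infDist_pt u) (continuous_infDist_pt v))
  · exact (hQ.inter hO₂).inter (isOpen_lt (continuous_infDist_pt v) (continuous_infDist_pt u))
  · rw [Set.disjoint_left]
    rintro x ⟨-, hx⟩ ⟨-, hx'⟩
    simp only [mem_setOf_eq] at hx hx'
    exact absurd hx' (not_lt_of_gt hx)
  · intro z hz
    have hzO₁ : z ∈ O₁ := (hu ▸ hz).1
    have h1 : infDist z u = 0 := infDist_zero_of_mem hz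
    have h2 : infDist z v ≠ 0 := by
      intro h0
      have hcl : z ∈ closure v := (mem_closure_iff_infDist_zero hvne).mpr h0
      rcases mem_closure_iff.mp hcl O₁ hO₁ hzO₁ with ⟨w, hwO₁, hwv⟩
      have hwu : w ∈ u := by
        rw [hu]; exact ⟨hwO₁, (hv ▸ hwv).2⟩
      exact Set.disjoint_left.mp huv hwu hwv
    have : 0 < infDist z v := lt_of_le_of_ne infDist_nonneg (Ne.symm h2)
    exact ⟨⟨huP hz, hzO₁⟩, by simpa [h1] using this⟩
  · intro z hz
    have hzO₂ : z ∈ O₂ := (hv ▸ hz).1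
    have h1 : infDist z v = 0 := infDist_zero_of_mem hz
    have h2 : infDist z u ≠ 0 := by
      intro h0
      have hcl : z ∈ closure u := (mem_closure_iff_infDist_zero hune).mpr h0
      rcases mem_closure_iff.mp hcl O₂ hO₂ hzO₂ with ⟨w, hwO₂, hwu⟩
      have hwv : w ∈ v := by
        rw [hv]; exact ⟨hwO₂, (hu ▸ hwu).2⟩
      exact Set.disjoint_left.mp huv hwu hwv
    have : 0 < infDist z u := lt_of_le_of_ne infDist_nonneg (Ne.symm h2)
    exact ⟨⟨hvQ hz, hzO₂⟩, by simpa [h1] using this⟩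
  · exact fun x hx => hx.1.1
  · exact fun x hx => hx.1.1

lemma tube_step {X Y : Type*} [MetricSpace X] [MetricSpace Y]
    (f : X → Y) (hf : Continuous f) (hclosed : IsClosedMap f)
    (hfib : ∀ y : Y, ¬ StronglyInfiniteDimensional (f ⁻¹' {y}))
    (P Q : ℕ → Set X) (hPo : ∀ i, IsOpen (P i)) (hQo : ∀ i, IsOpen (Q i))
    (hPQ : ∀ i, P i ∪ Q i = univ) (t : ℕ) (y : Y) :
    ∃ (W : Set Y) (U V : ℕ → Set X), IsOpen W ∧ y ∈ W ∧
      (∀ k, IsOpen (U k)) ∧ (∀ k, IsOpen (V k)) ∧ (∀ k, Disjoint (U k) (V k)) ∧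
      (∀ k, U k ⊆ Q (Nat.pair t k)) ∧ (∀ k, V k ⊆ P (Nat.pair t k)) ∧
      f ⁻¹' W ⊆ ⋃ k, (U k ∪ V k) := by
  classical
  set Z : Set X := f ⁻¹' {y} with hZdef
  set A' : ℕ → Set ↥Z := fun k => (Subtype.val ⁻¹' P (Nat.pair t k))ᶜ with hA'def
  set B' : ℕ → Set ↥Z := fun k => (Subtype.val ⁻¹' Q (Nat.pair t k))ᶜ with hB'def
  have hcond : ∀ k, IsClosed (A' k) ∧ IsClosed (B' k) ∧ Disjoint (A' k) (B' k) := by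
    intro k
    refine ⟨((hPo _).preimage continuous_subtype_val).isClosed_compl,
      ((hQo _).preimage continuous_subtype_val).isClosed_compl, ?_⟩
    rw [Set.disjoint_left]
    intro z hz1 hz2
    have : (z : X) ∈ P (Nat.pair t k) ∪ Q (Nat.pair t k) := by
      rw [hPQ]; trivial
    rcases this with h | h
    · exact hz1 h
    · exact hz2 h
  have hNoEss : ¬ IsEssentialFamily A' B' := fun h => hfib y ⟨A', B', hcond, h⟩
  have hM : ∃ M : ℕ → Set ↥Z, (∀ k, IsSeparator (A' k) (B' k) (M k)) ∧
      ¬(⋂ k, M k).Nonempty := by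
    by_contra h
    push_neg at h
    exact hNoEss fun L hL => h L hL
  obtain ⟨M, hMsep, hMne⟩ := hM
  have hMempty : (⋂ k, M k) = ∅ := not_nonempty_iff_eq_empty.mp hMne
  choose U' V' hU'o hV'o hUV' hA'U hB'V hcompl using fun k => (hMsep k).2
  have hU'Q : ∀ k, U' k ⊆ Subtype.val ⁻¹' Q (Nat.pair t k) := by
    intro k z hz
    by_contra hzQ
    exact Set.disjoint_left.mp (hUV' k) hz (hB'V k hzQ)
  have hV'P : ∀ k, V' k ⊆ Subtype.val ⁻¹' P (Nat.pair t k) := by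
    intro k z hz
    by_contra hzP
    exact Set.disjoint_left.mp (hUV' k) (hA'U k hzP) hz
  choose OU hOUo hOUpre using fun k => isOpen_induced_iff.mp (hU'o k)
  choose OV hOVo hOVpre using fun k => isOpen_induced_iff.mp (hV'o k)
  set u : ℕ → Set X := fun k => Subtype.val '' (U' k) with hudef
  set v : ℕ → Set X := fun k => Subtype.val '' (V' k) with hvdef
  have hu : ∀ k, u k = OU k ∩ Z := by
    intro k
    have := Subtype.image_preimage_coe Z (OU k)
    rw [hOUpre k] at this
    rw [hudef]
    simp only
    rw [this, inter_comm]
  have hv : ∀ k, v k = OV k ∩ Z := by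
    intro k
    have := Subtype.image_preimage_coe Z (OV k)
    rw [hOVpre k] at this
    rw [hvdef]
    simp only
    rw [this, inter_comm]
  have huQ : ∀ k, u k ⊆ Q (Nat.pair t k) := by
    intro k
    refine (Set.image_mono  (hU'Q k)).trans ?_
    exact Set.image_preimage_subset _ _
  have hvP : ∀ k, v k ⊆ P (Nat.pair t k) := by
    intro k
    refine (Set.image_mono  (hV'P k)).trans ?_
    exact Set.image_preimage_subset _ _
  have hd : ∀ k, ∃ U V : Set X, IsOpen U ∧ IsOpen V ∧ Disjoint U V ∧
      u k ⊆ U ∧ v k ⊆ V ∧ U ⊆ Q (Nat.pair t k) ∧ V ⊆ P (Nat.pair t k) := by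
    intro k
    exact disjointify (hu k) (hv k) (hOUo k) (hOVo k)
      ((Set.disjoint_image_iff Subtype.val_injective).mpr (hUV' k))
      (hQo _) (hPo _) (huQ k) (hvP k)
  choose U V hUo hVo hUV huU hvV hUQ hVP using hd
  have hZT : Z ⊆ ⋃ k, (U k ∪ V k) := by
    intro z hz
    have hζ : (⟨z, hz⟩ : ↥Z) ∉ ⋂ k, M k := by
      rw [hMempty]; exact notMem_empty _
    obtain ⟨k, hk⟩ : ∃ k, (⟨z, hz⟩ : ↥Z) ∉ M k := by
      simpa [mem_iInter] using hζ
    have : (⟨z, hz⟩ : ↥Z) ∈ U' k ∪ V' k := by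
      rw [← hcompl k]; exact hk
    rcases this with h | h
    · exact mem_iUnion.mpr ⟨k, Or.inl (huU k (mem_image_of_mem _ h))⟩
    · exact mem_iUnion.mpr ⟨k, Or.inr (hvV k (mem_image_of_mem _ h))⟩
  set T : Set X := ⋃ k, (U k ∪ V k) with hTdef
  have hTo : IsOpen T := isOpen_iUnion fun k => (hUo k).union (hVo k)
  have hKc : IsClosed Tᶜ := hTo.isClosed_compl
  refine ⟨(f '' Tᶜ)ᶜ, U, V, (hclosed _ hKc).isOpen_compl, ?_, hUo, hVo, hUV, hUQ, hVP, ?_⟩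
  · rintro ⟨x, hxK, rfl⟩
    exact hxK (hZT (by simp [hZdef]))
  · intro x hx
    by_contra hxT
    exact hx (mem_image_of_mem f hxT)

/-- If `f : X → Y` is a closed continuous surjection between separable
metric spaces, `Y` has property `C`, and every fibre `f ⁻¹' {y}` is weakly infinite
dimensional, then `X` is weakly infinite dimensional. -/
theorem weaklyInfiniteDimensional_of_closed_map_propertyC
    {X Y : Type*} [MetricSpace X] [TopologicalSpace.SeparableSpace X]
    [MetricSpace Y] [TopologicalSpace.SeparableSpace Y]
    (f : X → Y) (hf : Continuous f) (hclosed : IsClosedMap f)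
    (hsurj : Function.Surjective f)
    (hY : PropertyC Y)
    (hfib : ∀ y : Y, ¬ StronglyInfiniteDimensional (f ⁻¹' {y})) :
    ¬ StronglyInfiniteDimensional X := by
  classical
  rintro ⟨A, B, hcl, hess⟩
  by_cases hne : ∀ i, (A i).Nonempty ∧ (B i).Nonempty
  swap
  · -- degenerate case: some pair has an empty member
    push_neg at hne
    obtain ⟨i₀, hi₀⟩ := hne
    have hLsep : ∀ j, ∃ L, IsSeparator (A j) (B j) L :=
      fun j => sep_exists (hcl j).1 (hcl j).2.1 (hcl j).2.2
    set L : ℕ → Set X := fun j =>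
      if j = i₀ then ∅ else (hLsep j).choose with hLdef
    have hsep : ∀ j, IsSeparator (A j) (B j) (L j) := by
      intro j
      by_cases hj : j = i₀
      · subst hj
        have hempty : A j = ∅ ∨ B j = ∅ := by
          rcases eq_empty_or_nonempty (A j) with h | h
          · exact Or.inl h
          · exact Or.inr (hi₀ h)
        simp only [hLdef, if_pos rfl]
        rcases hempty with h | h
        · exact ⟨isClosed_empty, ∅, univ, isOpen_empty, isOpen_univ,
            disjoint_bot_left, by simp [h], subset_univ _, by simp⟩
        · exact ⟨isClosed_empty, univ, ∅, isOpen_univ, isOpen_empty,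
            disjoint_bot_right, subset_univ _, by simp [h], by simp⟩
      · simpa only [hLdef, if_neg hj] using (hLsep j).choose_spec
    obtain ⟨x, hx⟩ := hess L hsep
    have : x ∈ L i₀ := mem_iInter.mp hx i₀
    simp [hLdef] at this
  -- main case
  have hApos : ∀ i x, 0 < infDist x (A i) + infDist x (B i) := by
    intro i x
    rcases lt_or_ge 0 (infDist x (A i) + infDist x (B i)) with h | h
    · exact h
    exfalso
    have h1 : infDist x (A i) = 0 :=
      le_antisymm (by linarith [infDist_nonneg (s := B i) (x := x)]) infDist_nonneg
    have h2 : infDist x (B i) = 0 :=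
      le_antisymm (by linarith [infDist_nonneg (s := A i) (x := x)]) infDist_nonneg
    have hxA : x ∈ A i := by
      have := (mem_closure_iff_infDist_zero (hne i).1).mpr h1
      rwa [(hcl i).1.closure_eq] at this
    have hxB : x ∈ B i := by
      have := (mem_closure_iff_infDist_zero (hne i).2).mpr h2
      rwa [(hcl i).2.1.closure_eq] at this
    exact Set.disjoint_left.mp (hcl i).2.2 hxA hxB
  set g : ℕ → X → ℝ := fun i x =>
    infDist x (A i) / (infDist x (A i) + infDist x (B i)) with hgdef
  have hgc : ∀ i, Continuous (g i) := by
    intro i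
    exact (continuous_infDist_pt (A i)).div
      ((continuous_infDist_pt (A i)).add (continuous_infDist_pt (B i)))
      (fun x => ne_of_gt (hApos i x))
  have hgA : ∀ i, ∀ a ∈ A i, g i a = 0 := by
    intro i a ha
    simp [hgdef, infDist_zero_of_mem ha]
  have hgB : ∀ i, ∀ b ∈ B i, g i b = 1 := by
    intro i b hb
    have h0 : infDist b (B i) = 0 := infDist_zero_of_mem hb
    have : infDist b (A i) ≠ 0 := by
      intro hA0
      have := hApos i b
      rw [hA0, h0] at this
      linarith
    simp [hgdef, h0, div_self this]
  set P : ℕ → Set X := fun i => {x | g i x < 2/3} with hPdef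
  set Q : ℕ → Set X := fun i => {x | 1/3 < g i x} with hQdef
  have hPo : ∀ i, IsOpen (P i) := fun i => isOpen_lt (hgc i) continuous_const
  have hQo : ∀ i, IsOpen (Q i) := fun i => isOpen_lt continuous_const (hgc i)
  have hPQ : ∀ i, P i ∪ Q i = univ := by
    intro i
    apply eq_univ_iff_forall.mpr
    intro x
    rcases lt_or_ge (g i x) (2/3) with h | h
    · exact Or.inl h
    · exact Or.inr (by simp only [hQdef, mem_setOf_eq]; linarith)
  -- tubes
  choose W Uf Vf hWo hyW hUo hVo hUV hUQ hVP hWT using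
    fun (t : ℕ) (y : Y) => tube_step f hf hclosed hfib P Q hPo hQo hPQ t y
  -- property C
  set G : ℕ → Set (Set Y) := fun t => Set.range (fun y => W t y) with hGdef
  have hG : ∀ t, (∀ U ∈ G t, IsOpen U) ∧ ⋃₀ G t = univ := by
    intro t
    constructor
    · rintro U ⟨y, rfl⟩
      exact hWo t y
    · apply eq_univ_iff_forall.mpr
      intro y
      exact ⟨W t y, mem_range_self y, hyW t y⟩
  obtain ⟨H, hH, hHcov⟩ := hY G hG
  obtain ⟨a₀, ha₀⟩ := (hne 0).1
  have hYne : Nonempty Y := ⟨f a₀⟩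
  set yV : ℕ → Set Y → Y := fun t V =>
    if h : ∃ y, V ⊆ W t y then h.choose else Classical.arbitrary Y with hyVdef
  have hyVs : ∀ t V, V ∈ H t → V ⊆ W t (yV t V) := by
    intro t V hV
    obtain ⟨W', hW'G, hVW'⟩ := (hH t).2.2 V hV
    obtain ⟨y, hy⟩ := hW'G
    have hex : ∃ y, V ⊆ W t y := ⟨y, by rw [show W t y = W' from hy]; exact hVW'⟩
    simp only [hyVdef, dif_pos hex]
    exact hex.choose_spec
  -- glued families
  set D : ℕ → ℕ → Set X :=
    fun t k => ⋃ V ∈ H t, (f ⁻¹' V ∩ Uf t (yV t V) k) with hDdef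
  set E : ℕ → ℕ → Set X :=
    fun t k => ⋃ V ∈ H t, (f ⁻¹' V ∩ Vf t (yV t V) k) with hEdef
  have hDo : ∀ t k, IsOpen (D t k) :=
    fun t k => isOpen_biUnion fun V hV =>
      (((hH t).1 V hV).preimage hf).inter (hUo t (yV t V) k)
  have hEo : ∀ t k, IsOpen (E t k) :=
    fun t k => isOpen_biUnion fun V hV =>
      (((hH t).1 V hV).preimage hf).inter (hVo t (yV t V) k)
  have hDQ : ∀ t k, D t k ⊆ Q (Nat.pair t k) := by
    intro t k x hx
    obtain ⟨V, hV, -, hxU⟩ := mem_iUnion₂.mp hx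
    exact hUQ t (yV t V) k hxU
  have hEP : ∀ t k, E t k ⊆ P (Nat.pair t k) := by
    intro t k x hx
    obtain ⟨V, hV, -, hxV⟩ := mem_iUnion₂.mp hx
    exact hVP t (yV t V) k hxV
  have hDE : ∀ t k, Disjoint (E t k) (D t k) := by
    intro t k
    rw [Set.disjoint_left]
    intro x hxE hxD
    obtain ⟨V, hV, hxfV, hxVf⟩ := mem_iUnion₂.mp hxE
    obtain ⟨V', hV', hxfV', hxUf⟩ := mem_iUnion₂.mp hxD
    by_cases hVV : V = V'
    · subst hVV
      exact Set.disjoint_left.mp (hUV t (yV t V) k) hxUf hxVf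
    · exact Set.disjoint_left.mp ((hH t).2.1 hV hV' hVV) hxfV hxfV'
  -- final separators
  set CQ : ℕ → Set X := fun i => D (Nat.unpair i).1 (Nat.unpair i).2 with hCQdef
  set CP : ℕ → Set X := fun i => E (Nat.unpair i).1 (Nat.unpair i).2 with hCPdef
  have hCQQ : ∀ i, CQ i ⊆ Q i := by
    intro i
    have := hDQ (Nat.unpair i).1 (Nat.unpair i).2
    rwa [Nat.pair_unpair] at this
  have hCPP : ∀ i, CP i ⊆ P i := by
    intro i
    have := hEP (Nat.unpair i).1 (Nat.unpair i).2
    rwa [Nat.pair_unpair] at this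
  have hCPQ : ∀ i, Disjoint (CP i) (CQ i) := fun i => hDE _ _
  set FU : ℕ → Set X := fun i =>
    CP i ∪ ({x | g i x < 1/3} ∩ (closure (CQ i))ᶜ) with hFUdef
  set FV : ℕ → Set X := fun i =>
    CQ i ∪ ({x | 2/3 < g i x} ∩ (closure (CP i))ᶜ) with hFVdef
  set L : ℕ → Set X := fun i => (FU i ∪ FV i)ᶜ with hLdef
  have hclQ : ∀ i, closure (CQ i) ⊆ {x | 1/3 ≤ g i x} := by
    intro i
    apply closure_minimal
    · intro x hx
      have := hCQQ i hx
      simp only [hQdef, mem_setOf_eq] at this ⊢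
      linarith
    · exact isClosed_le continuous_const (hgc i)
  have hclP : ∀ i, closure (CP i) ⊆ {x | g i x ≤ 2/3} := by
    intro i
    apply closure_minimal
    · intro x hx
      have := hCPP i hx
      simp only [hPdef, mem_setOf_eq] at this ⊢
      linarith
    · exact isClosed_le (hgc i) continuous_const
  have hsep : ∀ i, IsSeparator (A i) (B i) (L i) := by
    intro i
    refine ⟨(IsOpen.union ?_ ?_).isClosed_compl, FU i, FV i, ?_, ?_, ?_, ?_, ?_,
      by rw [hLdef, compl_compl]⟩
    · exact (hEo _ _).union ((isOpen_lt (hgc i) continuous_const).inter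
        isClosed_closure.isOpen_compl)
    · exact (hDo _ _).union ((isOpen_lt continuous_const (hgc i)).inter
        isClosed_closure.isOpen_compl)
    · exact (hEo _ _).union ((isOpen_lt (hgc i) continuous_const).inter
        isClosed_closure.isOpen_compl)
    · exact (hDo _ _).union ((isOpen_lt continuous_const (hgc i)).inter
        isClosed_closure.isOpen_compl)
    · -- disjointness of FU FV
      rw [Set.disjoint_left]
      rintro x (hx | ⟨hx1, hx2⟩) hy
      · rcases hy with hy | ⟨hy1, hy2⟩
        · exact Set.disjoint_left.mp (hCPQ i) hx hy
        · exact hy2 (subset_closure hx)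
      · rcases hy with hy | ⟨hy1, hy2⟩
        · exact hx2 (subset_closure hy)
        · simp only [mem_setOf_eq] at hx1 hy1
          linarith
    · -- A i ⊆ FU i
      intro a ha
      right
      constructor
      · simp only [mem_setOf_eq, hgA i a ha]
        norm_num
      · intro hcl'
        have := hclQ i hcl'
        simp only [mem_setOf_eq, hgA i a ha] at this
        linarith
    · -- B i ⊆ FV i
      intro b hb
      right
      constructor
      · simp only [mem_setOf_eq, hgB i b hb]
        norm_num
      · intro hcl'
        have := hclP i hcl'
        simp only [mem_setOf_eq, hgB i b hb] at this
        linarith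
  obtain ⟨x₀, hx₀⟩ := hess L hsep
  have hx₀' : ∀ i, x₀ ∈ L i := mem_iInter.mp hx₀
  have : f x₀ ∈ ⋃ i, ⋃₀ H i := by rw [hHcov]; trivial
  obtain ⟨t, ht⟩ := mem_iUnion.mp this
  obtain ⟨V, hVH, hfxV⟩ := ht
  have hxW : x₀ ∈ f ⁻¹' (W t (yV t V)) := hyVs t V hVH hfxV
  obtain ⟨k, hk⟩ := mem_iUnion.mp (hWT t (yV t V) hxW)
  have hxL := hx₀' (Nat.pair t k)
  apply hxL
  have hup : Nat.unpair (Nat.pair t k) = (t, k) := Nat.unpair_pair t k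
  rcases hk with h | h
  · -- x₀ in the Q-side piece, hence in CQ (pair t k) ⊆ FV
    right
    left
    show x₀ ∈ D (Nat.unpair (Nat.pair t k)).1 (Nat.unpair (Nat.pair t k)).2
    rw [hup]
    exact mem_iUnion₂.mpr ⟨V, hVH, hfxV, h⟩
  · left
    left
    show x₀ ∈ E (Nat.unpair (Nat.pair t k)).1 (Nat.unpair (Nat.pair t k)).2
    rw [hup]
    exact mem_iUnion₂.mpr ⟨V, hVH, hfxV, h⟩
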